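/- arXiv:1710.04807 — 6 statements merged into one kernel-verified Lean document; each statement's English description precedes it below -/
import Mathlib

section
/- For every even integer m ≥ 2, the edge-coloured graph G_m has no full rainbow matching: there is no matching containing exactly one edge of each of the m+1 colours. -/
abbrev DSV (m : ℕ) := Fin m × (Fin 2 ⊕ Fin 2 × Fin (m / 2))

def Gm (m : ℕ) : SimpleGraph (DSV m) :=
  SimpleGraph.fromRel (fun a b =>
    a.1 = b.1 ∧ ((a.2.isLeft ∧ b.2.isLeft) ∨
      ∃ j l, a.2 = Sum.inl j ∧ b.2 = Sum.inr (j, l)))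

def colm (m : ℕ) : Sym2 (DSV m) → Option (Fin m) :=
  Sym2.lift ⟨fun a b => if a.2.isLeft ∧ b.2.isLeft then none else some (min a.1 b.1),
    fun a b => by
      by_cases h : (a.2.isLeft : Prop) ∧ (b.2.isLeft : Prop) <;>
        simp [h, and_comm, min_comm]⟩

def IsMatching {V : Type*} (G : SimpleGraph V) (M : Set (Sym2 V)) : Prop :=
  M ⊆ G.edgeSet ∧ ∀ e ∈ M, ∀ f ∈ M, e ≠ f → ∀ v, v ∈ e → v ∉ f

def HasFullRainbowMatching {V C : Type*} (G : SimpleGraph V) (c : Sym2 V → C) : Prop :=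
  ∃ M : Set (Sym2 V), IsMatching G M ∧ ∀ k : C, ∃! e, e ∈ M ∧ c e = k

theorem stmt3 (m : ℕ) (hm : Even m) (h2 : 2 ≤ m) :
    ¬ HasFullRainbowMatching (Gm m) (colm m) := by
  rintro ⟨M, ⟨hsub, hdisj⟩, hrain⟩
  obtain ⟨e, ⟨heM, hce⟩, -⟩ := hrain none
  revert heM hce
  induction e using Sym2.ind with
  | _ a b =>
  intro heM hce
  have hadj : (Gm m).Adj a b := hsub heM
  rw [Gm, SimpleGraph.fromRel_adj] at hadj
  obtain ⟨hne, hrel⟩ := hadj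
  have hk : a.1 = b.1 := by
    rcases hrel with ⟨h, -⟩ | ⟨h, -⟩
    · exact h
    · exact h.symm
  -- from colour none: both endpoints are left
  have hll : (a.2.isLeft : Prop) ∧ (b.2.isLeft : Prop) := by
    by_contra h
    simp [colm, h] at hce
  obtain ⟨x, hx⟩ := Sum.isLeft_iff.mp hll.1
  obtain ⟨y, hy⟩ := Sum.isLeft_iff.mp hll.2
  have hxy : x ≠ y := by
    rintro rfl
    exact hne (Prod.ext hk (hx.trans hy.symm))
  set k := a.1 with hk'
  -- the edge of colour `some k`
  obtain ⟨f, ⟨hfM, hcf⟩, -⟩ := hrain (some k)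
  revert hfM hcf
  induction f using Sym2.ind with
  | _ c d =>
  intro hfM hcf
  have hadj' : (Gm m).Adj c d := hsub hfM
  rw [Gm, SimpleGraph.fromRel_adj] at hadj'
  obtain ⟨hne', hrel'⟩ := hadj'
  have hcd : c.1 = d.1 := by
    rcases hrel' with ⟨h, -⟩ | ⟨h, -⟩
    · exact h
    · exact h.symm
  have hnll : ¬((c.2.isLeft : Prop) ∧ (d.2.isLeft : Prop)) := by
    intro h
    simp [colm, h] at hcf
  have hck : c.1 = k := by
    have : colm m s(c, d) = some (min c.1 d.1) := by simp [colm, hnll]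
    rw [hcf] at this
    have h2 := Option.some_injective _ this.symm
    rw [hcd, min_self] at h2
    rw [hcd]; exact h2
  -- f contains a central vertex (k, inl j)
  have hjf : ∃ j : Fin 2, ((k, Sum.inl j) : DSV m) ∈ s(c, d) := by
    rcases hrel' with ⟨-, hboth | ⟨j, l, hc2, -⟩⟩ | ⟨-, hboth | ⟨j, l, hd2, -⟩⟩
    · exact absurd ⟨hboth.1, hboth.2⟩ hnll
    · exact ⟨j, by rw [Sym2.mem_iff]; left
                   exact (show c = ((k, Sum.inl j) : DSV m) from Prod.ext hck hc2).symm⟩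
    · exact absurd ⟨hboth.2, hboth.1⟩ hnll
    · exact ⟨j, by rw [Sym2.mem_iff]; right
                   exact (show d = ((k, Sum.inl j) : DSV m) from
                     Prod.ext (hcd.symm.trans hck) hd2).symm⟩
  obtain ⟨j, hjf⟩ := hjf
  have hef : s(a, b) ≠ s(c, d) := by
    intro h
    rw [h, hcf] at hce
    exact Option.some_ne_none _ hce
  -- (k, inl j) is also in e
  have hje : ((k, Sum.inl j) : DSV m) ∈ s(a, b) := by
    rw [Sym2.mem_iff]
    have : j = x ∨ j = y := by
      rcases Fin.exists_fin_two.mp ⟨j, rfl⟩ with _ | _ <;>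
        [skip; skip] <;> omega
    rcases this with rfl | rfl
    · left; exact (show a = ((k, Sum.inl j) : DSV m) from Prod.ext rfl hx).symm
    · right; exact (show b = ((k, Sum.inl j) : DSV m) from Prod.ext hk.symm hy).symm
  exact hdisj _ heM _ hfM hef _ hje hjf
end

section
/- For every even integer m ≥ 4, there exists a bipartite graph G with a (not necessarily proper) edge colouring such that every colour class has at least Δ(G)+1 edges, yet G has no full rainbow matching. (This refutes the conjecture of Aharoni and Berger that every colour appearing on at least Δ(G)+1 edges forces a full rainbow matching in a bipartite graph.) -/
noncomputable instance {n : ℕ} (G : SimpleGraph (Fin n)) : DecidableRel G.Adj :=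
  Classical.decRel _

open Fin.NatCast

/-! ### A concrete counterexample: four double stars on 24 vertices.

Vertex `v` lies in component `v / 6`; within a component, `v % 6 = 0, 1` are the two
adjacent centres, `v % 6 = 2, 3` are leaves of centre 0 and `v % 6 = 4, 5` leaves of
centre 1.  Central edges get colour 4 ("blue"), leaf edges of component `i` colour `i`. -/

def rel24 (a b : Fin 24) : Prop :=
  (a : ℕ) / 6 = (b : ℕ) / 6 ∧
    (((a : ℕ) % 6 = 0 ∧ (b : ℕ) % 6 = 1) ∨
     ((a : ℕ) % 6 = 0 ∧ ((b : ℕ) % 6 = 2 ∨ (b : ℕ) % 6 = 3)) ∨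
     ((a : ℕ) % 6 = 1 ∧ ((b : ℕ) % 6 = 4 ∨ (b : ℕ) % 6 = 5)))

instance : DecidableRel rel24 := fun a b => by unfold rel24; infer_instance

def G24 : SimpleGraph (Fin 24) := SimpleGraph.fromRel rel24

def G24inst : DecidableRel G24.Adj := fun a b =>
  decidable_of_iff _ (SimpleGraph.fromRel_adj rel24 a b).symm

def col24 : Sym2 (Fin 24) → Fin 5 :=
  Sym2.lift ⟨fun a b => if (a : ℕ) % 6 ≤ 1 ∧ (b : ℕ) % 6 ≤ 1 then 4
      else ((min ((a : ℕ) / 6) ((b : ℕ) / 6) : ℕ) : Fin 5),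
    fun a b => by
      by_cases h : (a : ℕ) % 6 ≤ 1 ∧ (b : ℕ) % 6 ≤ 1 <;>
        simp [h, and_comm, min_comm]⟩

lemma md24 : @SimpleGraph.maxDegree _ G24 _ G24inst ≤ 3 := by decide

lemma md24' (inst : DecidableRel G24.Adj) :
    @SimpleGraph.maxDegree _ G24 _ inst ≤ 3 := by
  have h : inst = G24inst := by funext a b; exact Subsingleton.elim _ _
  rw [h]; exact md24

lemma col24_mk (a b : Fin 24) : col24 s(a, b) =
    if (a : ℕ) % 6 ≤ 1 ∧ (b : ℕ) % 6 ≤ 1 then 4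
      else ((min ((a : ℕ) / 6) ((b : ℕ) / 6) : ℕ) : Fin 5) := rfl

lemma adj24 (a b : Fin 24) : G24.Adj a b ↔ a ≠ b ∧ (rel24 a b ∨ rel24 b a) :=
  SimpleGraph.fromRel_adj rel24 a b

lemma four_le {S : Set (Sym2 (Fin 24))} (F : Finset (Sym2 (Fin 24)))
    (hF : 4 ≤ F.card) (h : ↑F ⊆ S) : 4 ≤ S.ncard :=
  calc 4 ≤ F.card := hF
  _ = (↑F : Set (Sym2 (Fin 24))).ncard := (Set.ncard_coe_finset F).symm
  _ ≤ S.ncard := Set.ncard_le_ncard h (Set.toFinite S)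

lemma class_ge (i : Fin 5) : 4 ≤ {e ∈ G24.edgeSet | col24 e = i}.ncard := by
  fin_cases i
  · refine four_le {s(0, 2), s(0, 3), s(1, 4), s(1, 5)} (by decide) ?_
    intro e he
    simp only [Finset.coe_insert, Finset.coe_singleton, Set.mem_insert_iff,
      Set.mem_singleton_iff] at he
    rcases he with rfl | rfl | rfl | rfl <;>
      exact ⟨(SimpleGraph.mem_edgeSet _).mpr ((adj24 _ _).mpr (by decide)), by decide⟩
  · refine four_le {s(6, 8), s(6, 9), s(7, 10), s(7, 11)} (by decide) ?_
    intro e he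
    simp only [Finset.coe_insert, Finset.coe_singleton, Set.mem_insert_iff,
      Set.mem_singleton_iff] at he
    rcases he with rfl | rfl | rfl | rfl <;>
      exact ⟨(SimpleGraph.mem_edgeSet _).mpr ((adj24 _ _).mpr (by decide)), by decide⟩
  · refine four_le {s(12, 14), s(12, 15), s(13, 16), s(13, 17)} (by decide) ?_
    intro e he
    simp only [Finset.coe_insert, Finset.coe_singleton, Set.mem_insert_iff,
      Set.mem_singleton_iff] at he
    rcases he with rfl | rfl | rfl | rfl <;>
      exact ⟨(SimpleGraph.mem_edgeSet _).mpr ((adj24 _ _).mpr (by decide)), by decide⟩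
  · refine four_le {s(18, 20), s(18, 21), s(19, 22), s(19, 23)} (by decide) ?_
    intro e he
    simp only [Finset.coe_insert, Finset.coe_singleton, Set.mem_insert_iff,
      Set.mem_singleton_iff] at he
    rcases he with rfl | rfl | rfl | rfl <;>
      exact ⟨(SimpleGraph.mem_edgeSet _).mpr ((adj24 _ _).mpr (by decide)), by decide⟩
  · refine four_le {s(0, 1), s(6, 7), s(12, 13), s(18, 19)} (by decide) ?_
    intro e he
    simp only [Finset.coe_insert, Finset.coe_singleton, Set.mem_insert_iff,
      Set.mem_singleton_iff] at he
    rcases he with rfl | rfl | rfl | rfl <;>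
      exact ⟨(SimpleGraph.mem_edgeSet _).mpr ((adj24 _ _).mpr (by decide)), by decide⟩

lemma no_rainbow : ¬ HasFullRainbowMatching G24 col24 := by
  rintro ⟨M, ⟨hME, hMd⟩, hM⟩
  obtain ⟨e4, ⟨he4M, he4c⟩, -⟩ := hM 4
  obtain ⟨a, b, rfl⟩ : ∃ x y, e4 = s(x, y) := by
    induction e4 using Sym2.ind with | _ x y => exact ⟨x, y, rfl⟩
  have hadj := (SimpleGraph.mem_edgeSet _).mp (hME he4M)
  rw [adj24] at hadj
  obtain ⟨hne, hr⟩ := hadj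
  rw [col24_mk] at he4c
  have ha24 : (a : ℕ) < 24 := a.isLt
  have hb24 : (b : ℕ) < 24 := b.isLt
  by_cases h : (a : ℕ) % 6 ≤ 1 ∧ (b : ℕ) % 6 ≤ 1
  case neg =>
    rw [if_neg h] at he4c
    have hv := congrArg Fin.val he4c
    simp only [Fin.val_natCast] at hv
    omega
  case pos =>
    unfold rel24 at hr
    have hcent : ((a : ℕ) % 6 = 0 ∧ (b : ℕ) % 6 = 1 ∨
        (a : ℕ) % 6 = 1 ∧ (b : ℕ) % 6 = 0) ∧ (a : ℕ) / 6 = (b : ℕ) / 6 := by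
      constructor <;> omega
    obtain ⟨hc, hdiv⟩ := hcent
    set j : ℕ := (a : ℕ) / 6 with hj
    have hj3 : j ≤ 3 := by omega
    obtain ⟨e, ⟨heM, hec⟩, -⟩ := hM ((j : ℕ) : Fin 5)
    obtain ⟨x, y, rfl⟩ : ∃ x y, e = s(x, y) := by
      induction e using Sym2.ind with | _ x y => exact ⟨x, y, rfl⟩
    have hadj2 := (SimpleGraph.mem_edgeSet _).mp (hME heM)
    rw [adj24] at hadj2
    obtain ⟨hne2, hr2⟩ := hadj2
    rw [col24_mk] at hec
    have hx24 : (x : ℕ) < 24 := x.isLt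
    have hy24 : (y : ℕ) < 24 := y.isLt
    have hne4 : ¬((x : ℕ) % 6 ≤ 1 ∧ (y : ℕ) % 6 ≤ 1) := by
      intro hxy
      rw [if_pos hxy] at hec
      have hv := congrArg Fin.val hec
      simp only [Fin.val_natCast] at hv
      omega
    rw [if_neg hne4] at hec
    have hval := congrArg Fin.val hec
    simp only [Fin.val_natCast] at hval
    unfold rel24 at hr2
    -- the two edges are distinct (different colours)
    have hEne : s(x, y) ≠ s(a, b) := by
      intro hEq
      rcases Sym2.eq_iff.mp hEq with ⟨rfl, rfl⟩ | ⟨rfl, rfl⟩ <;>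
        exact hne4 ⟨by omega, by omega⟩
    -- the leaf edge shares its centre endpoint with the blue edge
    have hshare : (x : ℕ) = (a : ℕ) ∨ (x : ℕ) = (b : ℕ) ∨
        (y : ℕ) = (a : ℕ) ∨ (y : ℕ) = (b : ℕ) := by
      omega
    rcases hshare with hs | hs | hs | hs
    · exact hMd _ heM _ he4M hEne x (Sym2.mem_mk_left x y)
        ((Fin.ext hs : x = a) ▸ Sym2.mem_mk_left a b)
    · exact hMd _ heM _ he4M hEne x (Sym2.mem_mk_left x y)
        ((Fin.ext hs : x = b) ▸ Sym2.mem_mk_right a b)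
    · exact hMd _ heM _ he4M hEne y (Sym2.mem_mk_right x y)
        ((Fin.ext hs : y = a) ▸ Sym2.mem_mk_left a b)
    · exact hMd _ heM _ he4M hEne y (Sym2.mem_mk_right x y)
        ((Fin.ext hs : y = b) ▸ Sym2.mem_mk_right a b)

theorem stmt4 (m : ℕ) (hm : Even m) (h4 : 4 ≤ m) :
    ∃ (n k : ℕ) (G : SimpleGraph (Fin n)) (c : Sym2 (Fin n) → Fin k),
      (∃ A : Set (Fin n), ∀ a b, G.Adj a b → (a ∈ A ↔ b ∉ A)) ∧
      (∀ i : Fin k, G.maxDegree + 1 ≤ {e ∈ G.edgeSet | c e = i}.ncard) ∧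
      ¬ HasFullRainbowMatching G c := by
  refine ⟨24, 5, G24, col24,
    ⟨{v : Fin 24 | (v : ℕ) % 6 = 0 ∨ 4 ≤ (v : ℕ) % 6}, ?_⟩, ?_, no_rainbow⟩
  · intro a b hab
    rw [adj24] at hab
    obtain ⟨hne, hr⟩ := hab
    unfold rel24 at hr
    simp only [Set.mem_setOf_eq]
    omega
  · intro i
    have h1 : G24.maxDegree ≤ 3 := md24' _
    have h2 := class_ge i
    omega
end

section
/- For every constant c, there exists an edge-coloured graph G in which every colour class has at least Δ(G) + c edges but G has no full rainbow matching. (Hence the bound Δ(G)+2 in the conjectures of Aharoni, Berger, Chudnovsky, Howard and Seymour cannot be replaced by Δ(G) plus any constant.) -/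
lemma gm_adj {m : ℕ} (a b : DSV m) : (Gm m).Adj a b ↔ a ≠ b ∧ a.1 = b.1 ∧
    ((a.2.isLeft ∧ b.2.isLeft) ∨
      (∃ j l, a.2 = Sum.inl j ∧ b.2 = Sum.inr (j, l)) ∨
      (∃ j l, b.2 = Sum.inl j ∧ a.2 = Sum.inr (j, l))) := by
  rw [Gm, SimpleGraph.fromRel_adj]
  constructor
  · rintro ⟨hne, (⟨h1, h2⟩ | ⟨h1, h2⟩)⟩
    · refine ⟨hne, h1, ?_⟩
      rcases h2 with h2 | h2
      exacts [Or.inl h2, Or.inr (Or.inl h2)]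
    · refine ⟨hne, h1.symm, ?_⟩
      rcases h2 with ⟨x, y⟩ | h2
      exacts [Or.inl ⟨y, x⟩, Or.inr (Or.inr h2)]
  · rintro ⟨hne, h1, (h | h | h)⟩
    · exact ⟨hne, Or.inl ⟨h1, Or.inl h⟩⟩
    · exact ⟨hne, Or.inl ⟨h1, Or.inr h⟩⟩
    · exact ⟨hne, Or.inr ⟨h1.symm, Or.inr h⟩⟩


lemma colm_mk {m : ℕ} (a b : DSV m) :
    colm m s(a, b) = if a.2.isLeft ∧ b.2.isLeft then none else some (min a.1 b.1) :=
  rfl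

lemma fin2cases : ∀ p q r : Fin 2, p ≠ q → r = p ∨ r = q := by decide

theorem stmt5 (c : ℕ) :
    ∃ (n k : ℕ) (G : SimpleGraph (Fin n)) (col : Sym2 (Fin n) → Fin k),
      (∀ i : Fin k, G.maxDegree + c ≤ {e ∈ G.edgeSet | col e = i}.ncard) ∧
      ¬ HasFullRainbowMatching G col := by
  classical
  set m := 2 * c + 2 with hm
  have hm2 : m / 2 = c + 1 := by omega
  set n := Fintype.card (DSV m) with hn
  set eqv : DSV m ≃ Fin n := Fintype.equivFin _ with heqv
  set G : SimpleGraph (Fin n) := (Gm m).comap ⇑eqv.symm with hG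
  set col : Sym2 (Fin n) → Fin (m + 1) :=
    fun e => (finSuccEquiv m).symm (colm m (Sym2.map ⇑eqv.symm e)) with hcoldef
  have hcol_mk : ∀ x y : Fin n, col s(x, y) =
      (finSuccEquiv m).symm (colm m s(eqv.symm x, eqv.symm y)) := by
    intro x y
    rw [hcoldef]
    simp [Sym2.map_pair_eq]
  -- degree bound
  have hdeg : ∀ v, G.degree v ≤ c + 2 := by
    intro v
    rcases hv : eqv.symm v with ⟨i, x⟩
    have hvv : v = eqv (i, x) := by rw [← hv, Equiv.apply_symm_apply]
    rcases x with j | ⟨j, l⟩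
    · -- centre
      set T : Finset (DSV m) :=
        insert (i, (Sum.inl 0 : Fin 2 ⊕ Fin 2 × Fin (m / 2))) (insert (i, Sum.inl 1)
          (Finset.univ.image fun l : Fin (m / 2) => (i, Sum.inr (j, l)))) with hT
    
      have hTmem : ∀ j' : Fin 2, (i, (Sum.inl j' : Fin 2 ⊕ Fin 2 × Fin (m / 2))) ∈ T := by
        intro j'
        rcases fin2cases 0 1 j' (by decide) with h | h <;> subst h <;> simp [hT]
      have hsub : G.neighborFinset v ⊆ (T.image eqv).erase v := by
        intro w hw
        rw [SimpleGraph.mem_neighborFinset] at hw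
        have hadj : (Gm m).Adj (eqv.symm v) (eqv.symm w) := hw
        rw [hv, gm_adj] at hadj
        obtain ⟨hne, hcomp, hcase⟩ := hadj
        refine Finset.mem_erase.mpr ⟨hw.ne', ?_⟩
        have hw2 : w = eqv (eqv.symm w) := (Equiv.apply_symm_apply _ _).symm
        rw [hw2]
        refine Finset.mem_image_of_mem eqv ?_
        rcases hb : eqv.symm w with ⟨i', y⟩
        rw [hb] at hcomp hcase
        dsimp only at hcomp hcase
        subst hcomp
        rcases hcase with ⟨-, hy⟩ | ⟨j₁, l₁, hj₁, hy⟩ | ⟨j₁, l₁, hy, hj₁⟩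
        · rcases Sum.isLeft_iff.mp hy with ⟨j', hj'⟩
          rw [hj']
          exact hTmem j'
        · simp only [Sum.inl.injEq] at hj₁
          subst hj₁
          rw [hy, hT]
          simp
        · simp at hj₁
      have hvT : v ∈ T.image eqv := by
        rw [hvv]
        exact Finset.mem_image_of_mem eqv (hTmem j)
      calc G.degree v ≤ ((T.image eqv).erase v).card := Finset.card_le_card hsub
        _ = (T.image eqv).card - 1 := Finset.card_erase_of_mem hvT
        _ ≤ T.card - 1 := by
            have := Finset.card_image_le (s := T) (f := eqv)
            omega
        _ ≤ (1 + (1 + m / 2)) - 1 := by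
            have h1 := Finset.card_insert_le (i, (Sum.inl 0 : Fin 2 ⊕ Fin 2 × Fin (m / 2)))
              (insert (i, Sum.inl 1) (Finset.univ.image fun l : Fin (m / 2) => (i, Sum.inr (j, l))))
            have h2 := Finset.card_insert_le (i, (Sum.inl 1 : Fin 2 ⊕ Fin 2 × Fin (m / 2)))
              (Finset.univ.image fun l : Fin (m / 2) => (i, Sum.inr (j, l)))
            have h3 := Finset.card_image_le (s := (Finset.univ : Finset (Fin (m / 2))))
              (f := fun l : Fin (m / 2) => ((i, Sum.inr (j, l)) : DSV m))
            simp only [Finset.card_univ, Fintype.card_fin] at h3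
            rw [hT]
            omega
        _ ≤ c + 2 := by omega
    · -- leaf
      have hsub : G.neighborFinset v ⊆ {eqv (i, Sum.inl j)} := by
        intro w hw
        rw [SimpleGraph.mem_neighborFinset] at hw
        have hadj : (Gm m).Adj (eqv.symm v) (eqv.symm w) := hw
        rw [hv, gm_adj] at hadj
        obtain ⟨hne, hcomp, hcase⟩ := hadj
        rcases hb : eqv.symm w with ⟨i', y⟩
        rw [hb] at hcomp hcase
        dsimp only at hcomp hcase
        subst hcomp
        rcases hcase with ⟨hy, -⟩ | ⟨j₁, l₁, hj₁, hy⟩ | ⟨j₁, l₁, hy, hj₁⟩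
        · simp at hy
        · simp at hj₁
        · simp only [Sum.inr.injEq, Prod.mk.injEq] at hj₁
          have hwv : w = eqv (i, y) := by rw [← hb, Equiv.apply_symm_apply]
          rw [Finset.mem_singleton, hwv, hy, hj₁.1]
      calc G.degree v ≤ ({eqv (i, Sum.inl j)} : Finset (Fin n)).card :=
            Finset.card_le_card hsub
        _ ≤ c + 2 := by simp
  have hmax : G.maxDegree ≤ c + 2 := SimpleGraph.maxDegree_le_of_forall_degree_le _ _ hdeg
  refine ⟨n, m + 1, G, col, ?_, ?_⟩
  · -- colour classes are large
    intro k
    have hbig : m ≤ {e ∈ G.edgeSet | col e = k}.ncard := by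
      rcases ho : finSuccEquiv m k with _ | i
      · -- blue: central edges
        set f : Fin m → Sym2 (Fin n) :=
          fun i => s(eqv (i, Sum.inl 0), eqv (i, Sum.inl 1)) with hf
        have hinj : Function.Injective f := by
          intro i i' h
          rw [hf] at h
          simp only [Sym2.eq_iff] at h
          rcases h with ⟨h1, -⟩ | ⟨h1, -⟩ <;>
            · have := eqv.injective h1
              simp only [Prod.mk.injEq] at this
              exact this.1
        have hran : Set.range f ⊆ {e ∈ G.edgeSet | col e = k} := by
          rintro _ ⟨i, rfl⟩
          constructor
          · rw [hf]
            simp only [SimpleGraph.mem_edgeSet]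
            show (Gm m).Adj (eqv.symm (eqv _)) (eqv.symm (eqv _))
            simp only [Equiv.symm_apply_apply]
            rw [gm_adj]
            exact ⟨by simp, rfl, Or.inl ⟨rfl, rfl⟩⟩
          · show col (f i) = k
            rw [hf]
            simp only
            rw [hcol_mk]
            simp only [Equiv.symm_apply_apply, colm_mk]
            rw [if_pos ⟨rfl, rfl⟩, ← ho, Equiv.symm_apply_apply]
        calc m = (Set.range f).ncard := by
              rw [← Set.image_univ, Set.ncard_image_of_injective _ hinj, Set.ncard_univ]
              simp
          _ ≤ _ := Set.ncard_le_ncard hran (Set.toFinite _)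
      · -- leaf colour i
        set g : Fin 2 × Fin (m / 2) → Sym2 (Fin n) :=
          fun p => s(eqv (i, Sum.inl p.1), eqv (i, Sum.inr p)) with hg
        have hinj : Function.Injective g := by
          rintro ⟨j, l⟩ ⟨j', l'⟩ h
          rw [hg] at h
          simp only [Sym2.eq_iff] at h
          rcases h with ⟨h1, h2⟩ | ⟨h1, h2⟩
          · have := eqv.injective h2
            simp only [Prod.mk.injEq, Sum.inr.injEq] at this
            obtain ⟨-, h2, h3⟩ := this
            simp [h2, h3]
          · have := eqv.injective h1
            simp at this
        have hran : Set.range g ⊆ {e ∈ G.edgeSet | col e = k} := by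
          rintro _ ⟨⟨j, l⟩, rfl⟩
          constructor
          · rw [hg]
            simp only [SimpleGraph.mem_edgeSet]
            show (Gm m).Adj (eqv.symm (eqv _)) (eqv.symm (eqv _))
            simp only [Equiv.symm_apply_apply]
            rw [gm_adj]
            exact ⟨by simp, rfl, Or.inr (Or.inl ⟨j, l, rfl, rfl⟩)⟩
          · show col (g (j, l)) = k
            rw [hg]
            simp only
            rw [hcol_mk]
            simp only [Equiv.symm_apply_apply, colm_mk]
            rw [if_neg (by simp), min_self]
            rw [← ho, Equiv.symm_apply_apply]
        calc m = (Set.range g).ncard := by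
              rw [← Set.image_univ, Set.ncard_image_of_injective _ hinj, Set.ncard_univ]
              simp [Nat.card_eq_fintype_card]
              omega
          _ ≤ _ := Set.ncard_le_ncard hran (Set.toFinite _)
    calc _ ≤ (c + 2) + c := Nat.add_le_add_right (by convert hmax) c
      _ ≤ _ := by omega
  · -- no full rainbow matching
    rintro ⟨M, ⟨hME, hMd⟩, hM⟩
    have hcol_eq : ∀ (e : Sym2 (Fin n)) (o : Option (Fin m)),
        col e = (finSuccEquiv m).symm o ↔ colm m (Sym2.map ⇑eqv.symm e) = o := by
      intro e o
      rw [hcoldef]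
      exact Equiv.apply_eq_iff_eq _
    obtain ⟨e, ⟨heM, hec⟩, -⟩ := hM ((finSuccEquiv m).symm none)
    rw [hcol_eq] at hec
    have exrep : ∀ e' : Sym2 (Fin n), ∃ x y, e' = s(x, y) := fun e' =>
      ⟨e'.out.1, e'.out.2, by rw [Sym2.mk, Prod.mk.eta, Quot.out_eq]⟩
    obtain ⟨x, y, rfl⟩ := exrep e
    rw [Sym2.map_pair_eq, colm_mk] at hec
    -- e is a central edge
    have hadj : (Gm m).Adj (eqv.symm x) (eqv.symm y) := (SimpleGraph.mem_edgeSet _).mp (hME heM)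
    have hLL : (eqv.symm x).2.isLeft ∧ (eqv.symm y).2.isLeft := by
      by_contra h
      rw [if_neg h] at hec
      exact Option.some_ne_none _ hec
    rw [gm_adj] at hadj
    obtain ⟨hne, hcomp, -⟩ := hadj
    obtain ⟨ja, hja⟩ := Sum.isLeft_iff.mp hLL.1
    obtain ⟨jb, hjb⟩ := Sum.isLeft_iff.mp hLL.2
    set i : Fin m := (eqv.symm x).1 with hi
    -- the colour-i edge
    obtain ⟨f, ⟨hfM, hfc⟩, -⟩ := hM ((finSuccEquiv m).symm (some i))
    rw [hcol_eq] at hfc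
    obtain ⟨x', y', rfl⟩ := exrep f
    rw [Sym2.map_pair_eq, colm_mk] at hfc
    have hadjf : (Gm m).Adj (eqv.symm x') (eqv.symm y') :=
      (SimpleGraph.mem_edgeSet _).mp (hME hfM)
    rw [gm_adj] at hadjf
    obtain ⟨hne', hcomp', hcase'⟩ := hadjf
    have hnLL : ¬((eqv.symm x').2.isLeft = true ∧ (eqv.symm y').2.isLeft = true) := by
      intro h
      rw [if_pos h] at hfc
      exact nomatch hfc
    rw [if_neg hnLL] at hfc
    have hmin : (eqv.symm x').1 = i := by
      have := Option.some.inj hfc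
      rw [← this, ← hcomp', min_self]
    -- find the centre vertex of f
    have key : ∃ j₂ : Fin 2, (eqv (i, Sum.inl j₂) = x' ∨ eqv (i, Sum.inl j₂) = y') := by
      rcases hcase' with ⟨hl1, hl2⟩ | ⟨j₂, l₂, h1, h2⟩ | ⟨j₂, l₂, h1, h2⟩
      · exact absurd ⟨hl1, hl2⟩ hnLL
      · refine ⟨j₂, Or.inl ?_⟩
        have hh : eqv.symm x' = (i, Sum.inl j₂) := Prod.ext hmin h1
        rw [← hh, Equiv.apply_symm_apply]
      · refine ⟨j₂, Or.inr ?_⟩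
        have hfst : (eqv.symm y').1 = i := by rw [← hcomp']; exact hmin
        have hh : eqv.symm y' = (i, Sum.inl j₂) := Prod.ext hfst h1
        rw [← hh, Equiv.apply_symm_apply]
    obtain ⟨j₂, hj₂⟩ := key
    -- the centre vertex also lies in e
    have hxeq : eqv.symm x = ((i : Fin m), Sum.inl ja) := Prod.ext hi.symm hja
    have hyeq : eqv.symm y = ((i : Fin m), Sum.inl jb) := Prod.ext hcomp.symm hjb
    have hxa : x = eqv (i, Sum.inl ja) := by rw [← hxeq, Equiv.apply_symm_apply]
    have hyb : y = eqv ((i : Fin m), Sum.inl jb) := by rw [← hyeq, Equiv.apply_symm_apply]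
    have hjajb : ja ≠ jb := by
      intro h
      apply hne
      rw [hxeq, hyeq, h]
    have hv0e : eqv (i, Sum.inl j₂) ∈ s(x, y) := by
      rw [Sym2.mem_iff]
      rcases fin2cases ja jb j₂ hjajb with h | h
      · left; rw [hxa, h]
      · right; rw [hyb, h]
    have hv0f : eqv (i, Sum.inl j₂) ∈ s(x', y') := by
      rw [Sym2.mem_iff]
      rcases hj₂ with h | h
      · left; exact h
      · right; exact h
    have hcolme : colm m s(eqv.symm x, eqv.symm y) = none := by
      rw [colm_mk, if_pos hLL]
    have hcolmf : colm m s(eqv.symm x', eqv.symm y') = some i := by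
      rw [colm_mk, if_neg hnLL]; exact hfc
    have hef : s(x, y) ≠ s(x', y') := by
      intro h
      have h2 : colm m s(eqv.symm x, eqv.symm y) = colm m s(eqv.symm x', eqv.symm y') := by
        rw [← Sym2.map_pair_eq (⇑eqv.symm), ← Sym2.map_pair_eq (⇑eqv.symm), h]
      rw [hcolme, hcolmf] at h2
      exact nomatch h2
    exact hMd _ heM _ hfM hef _ hv0e hv0f
end

section
/- For every even m ≥ 4, there exists a tripartite 3-uniform hypergraph H with vertex parts V1, V2, V3 such that every vertex of V1 has degree m, every vertex of V2 ∪ V3 has degree at most m/2 + 1 (so δ(V1) > Δ(V2 ∪ V3)), and yet H has no matching covering all of V1. (This refutes Conjecture 2.5 of Aharoni and Berger.) -/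
namespace Stmt9Aux

abbrev Et (m k : ℕ) := Fin m ⊕ ((Fin m × Fin k) ⊕ (Fin m × Fin k))

variable (m k : ℕ)

def col : Et m k → Fin (m+1)
  | .inl _ => 0
  | .inr (.inl p) => p.1.succ
  | .inr (.inr p) => p.1.succ

def cen (i : Fin m) : Fin (m + m*k) := ⟨i, by have := i.isLt; omega⟩

def leaf (i : Fin m) (t : Fin k) : Fin (m + m*k) :=
  ⟨m + ((i : ℕ)*k + t), by
    have h1 : (i:ℕ) + 1 ≤ m := i.isLt
    have h2 : (t:ℕ) < k := t.isLt
    have h3 : (i:ℕ)*k + k ≤ m*k := by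
      have := Nat.mul_le_mul_right k h1
      simpa [Nat.add_mul] using this
    omega⟩

def u2 : Et m k → Fin (m + m*k)
  | .inl i => cen m k i
  | .inr (.inl p) => cen m k p.1
  | .inr (.inr p) => leaf m k p.1 p.2

def w3 : Et m k → Fin (m + m*k)
  | .inl i => cen m k i
  | .inr (.inl p) => leaf m k p.1 p.2
  | .inr (.inr p) => cen m k p.1

def edge (e : Et m k) : Finset (Fin (m+1) ⊕ Fin (m + m*k) ⊕ Fin (m + m*k)) :=
  {Sum.inl (col m k e), Sum.inr (Sum.inl (u2 m k e)), Sum.inr (Sum.inr (w3 m k e))}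

lemma mem_inl_edge {a : Fin (m+1)} {e : Et m k} :
    Sum.inl a ∈ edge m k e ↔ a = col m k e := by simp [edge]

lemma mem_inr_inl_edge {b : Fin (m + m*k)} {e : Et m k} :
    Sum.inr (Sum.inl b) ∈ edge m k e ↔ b = u2 m k e := by simp [edge]

lemma mem_inr_inr_edge {b : Fin (m + m*k)} {e : Et m k} :
    Sum.inr (Sum.inr b) ∈ edge m k e ↔ b = w3 m k e := by simp [edge]

lemma cen_inj {i j : Fin m} (h : cen m k i = cen m k j) : i = j := by
  have : (i : ℕ) = j := by simpa [cen, Fin.ext_iff] using h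
  exact Fin.ext this

lemma leaf_ne_cen {i j : Fin m} {t : Fin k} : leaf m k i t ≠ cen m k j := by
  have := j.isLt
  simp only [leaf, cen, Ne, Fin.mk.injEq]
  omega

lemma leaf_inj {i j : Fin m} {t s : Fin k} (h : leaf m k i t = leaf m k j s) :
    i = j ∧ t = s := by
  have hv : (i:ℕ)*k + t = (j:ℕ)*k + s := by simpa [leaf, Fin.ext_iff] using h
  have ht := t.isLt; have hs := s.isLt
  have hij : (i:ℕ) = j := by
    rcases lt_trichotomy (i:ℕ) j with h' | h' | h'
    · have h2 : ((i:ℕ)+1)*k ≤ (j:ℕ)*k := Nat.mul_le_mul_right k h'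
      rw [Nat.add_mul, one_mul] at h2
      omega
    · exact h'
    · have h2 : ((j:ℕ)+1)*k ≤ (i:ℕ)*k := Nat.mul_le_mul_right k h'
      rw [Nat.add_mul, one_mul] at h2
      omega
  refine ⟨Fin.ext hij, Fin.ext ?_⟩
  rw [hij] at hv
  omega

lemma edge_injective : Function.Injective (edge m k) := by
  intro e e' h
  have hc : col m k e = col m k e' := by
    have h1 : Sum.inl (col m k e) ∈ edge m k e' := by
      rw [← h]; exact (mem_inl_edge m k).mpr rfl
    exact ((mem_inl_edge m k).mp h1).symm ▸ rfl
  have hu : u2 m k e = u2 m k e' := by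
    have h1 : Sum.inr (Sum.inl (u2 m k e)) ∈ edge m k e' := by
      rw [← h]; exact (mem_inr_inl_edge m k).mpr rfl
    exact (mem_inr_inl_edge m k).mp h1
  have hw : w3 m k e = w3 m k e' := by
    have h1 : Sum.inr (Sum.inr (w3 m k e)) ∈ edge m k e' := by
      rw [← h]; exact (mem_inr_inr_edge m k).mpr rfl
    exact (mem_inr_inr_edge m k).mp h1
  clear h
  rcases e with i | (p | p) <;> rcases e' with j | (q | q)
  · rw [cen_inj m k hu]
  · exact absurd hc.symm (Fin.succ_ne_zero _)
  · exact absurd hc.symm (Fin.succ_ne_zero _)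
  · exact absurd hc (Fin.succ_ne_zero _)
  · simp only [col, Fin.succ_inj] at hc
    simp only [w3] at hw
    obtain ⟨h1, h2⟩ := leaf_inj m k hw
    simp [Prod.ext_iff, h1, h2]
  · simp only [u2] at hu
    exact absurd hu.symm (leaf_ne_cen m k)
  · exact absurd hc (Fin.succ_ne_zero _)
  · simp only [u2] at hu
    exact absurd hu (leaf_ne_cen m k)
  · simp only [u2] at hu
    obtain ⟨h1, h2⟩ := leaf_inj m k hu
    simp [Prod.ext_iff, h1, h2]

lemma card_filter_image {α β : Type*} [DecidableEq β] [Fintype α] [DecidableEq α]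
    (f : α → β) (hf : Function.Injective f) (p : β → Prop) [DecidablePred p] :
    ((Finset.univ.image f).filter p).card = (Finset.univ.filter fun a => p (f a)).card := by
  rw [Finset.filter_image, Finset.card_image_of_injective _ hf]

lemma col_degree (hmk : m = k + k) (a : Fin (m+1)) :
    (Finset.univ.filter fun e : Et m k => Sum.inl a ∈ edge m k e).card = m := by
  simp only [mem_inl_edge]
  rw [Finset.card_filter]
  rw [Fintype.sum_sum_type, Fintype.sum_sum_type, Fintype.sum_prod_type, Fintype.sum_prod_type]
  induction a using Fin.cases with
  | zero =>
      simp [col, Fin.succ_ne_zero, (Fin.succ_ne_zero · |>.symm)]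
  | succ j =>
      simp [col, Fin.succ_ne_zero, Fin.succ_inj, Finset.sum_ite_eq, Finset.sum_ite_eq']
      omega

lemma u2_degree (b : Fin (m + m*k)) :
    (Finset.univ.filter fun e : Et m k => Sum.inr (Sum.inl b) ∈ edge m k e).card ≤ k + 1 := by
  simp only [mem_inr_inl_edge]
  rw [Finset.card_filter]
  rw [Fintype.sum_sum_type, Fintype.sum_sum_type]
  by_cases hb : (b : ℕ) < m
  · set j : Fin m := ⟨b, hb⟩ with hj
    have hbj : b = cen m k j := by simp [cen, hj, Fin.ext_iff]
    have hcen : ∀ i : Fin m, (b = cen m k i ↔ i = j) :=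
      fun i => ⟨fun h => (cen_inj m k (hbj.symm.trans h)).symm, fun h => h ▸ hbj⟩
    have hleaf : ∀ (i : Fin m) (t : Fin k), b ≠ leaf m k i t := by
      intro i t h
      exact leaf_ne_cen m k (hbj.symm.trans h).symm
    rw [Fintype.sum_prod_type, Fintype.sum_prod_type]
    simp [u2, hcen, hleaf, Finset.sum_ite_eq, Finset.sum_ite_eq']
    omega
  · have hcen : ∀ i : Fin m, b ≠ cen m k i := by
      intro i h
      rw [Fin.ext_iff] at h
      simp [cen] at h
      have := i.isLt
      omega
    have hA : ∑ i : Fin m, (if b = u2 m k (Sum.inl i) then 1 else 0) = 0 :=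
      Finset.sum_eq_zero fun i _ => if_neg (hcen i)
    have hB : ∑ p : Fin m × Fin k, (if b = u2 m k (Sum.inr (Sum.inl p)) then 1 else 0) = 0 :=
      Finset.sum_eq_zero fun p _ => if_neg (hcen p.1)
    have h3 : ∑ p : Fin m × Fin k, (if b = u2 m k (Sum.inr (Sum.inr p)) then 1 else 0) ≤ 1 := by
      rw [← Finset.card_filter]
      apply Finset.card_le_one.mpr
      rintro ⟨i, t⟩ h1 ⟨i', t'⟩ h2
      simp only [Finset.mem_filter, u2] at h1 h2
      obtain ⟨hii, htt⟩ := leaf_inj m k ((Finset.mem_filter.mp h1).2.symm.trans (Finset.mem_filter.mp h2).2)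
      exact Prod.ext hii htt
    rw [hA, hB]
    omega

lemma w3_degree (b : Fin (m + m*k)) :
    (Finset.univ.filter fun e : Et m k => Sum.inr (Sum.inr b) ∈ edge m k e).card ≤ k + 1 := by
  simp only [mem_inr_inr_edge]
  rw [Finset.card_filter]
  rw [Fintype.sum_sum_type, Fintype.sum_sum_type]
  by_cases hb : (b : ℕ) < m
  · set j : Fin m := ⟨b, hb⟩ with hj
    have hbj : b = cen m k j := by simp [cen, hj, Fin.ext_iff]
    have hcen : ∀ i : Fin m, (b = cen m k i ↔ i = j) :=
      fun i => ⟨fun h => (cen_inj m k (hbj.symm.trans h)).symm, fun h => h ▸ hbj⟩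
    have hleaf : ∀ (i : Fin m) (t : Fin k), b ≠ leaf m k i t := by
      intro i t h
      exact leaf_ne_cen m k (hbj.symm.trans h).symm
    rw [Fintype.sum_prod_type, Fintype.sum_prod_type]
    simp [w3, hcen, hleaf, Finset.sum_ite_eq, Finset.sum_ite_eq']
    omega
  · have hcen : ∀ i : Fin m, b ≠ cen m k i := by
      intro i h
      rw [Fin.ext_iff] at h
      simp [cen] at h
      have := i.isLt
      omega
    have hA : ∑ i : Fin m, (if b = w3 m k (Sum.inl i) then 1 else 0) = 0 :=
      Finset.sum_eq_zero fun i _ => if_neg (hcen i)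
    have hB : ∑ p : Fin m × Fin k, (if b = w3 m k (Sum.inr (Sum.inr p)) then 1 else 0) = 0 :=
      Finset.sum_eq_zero fun p _ => if_neg (hcen p.1)
    have h3 : ∑ p : Fin m × Fin k, (if b = w3 m k (Sum.inr (Sum.inl p)) then 1 else 0) ≤ 1 := by
      rw [← Finset.card_filter]
      apply Finset.card_le_one.mpr
      rintro ⟨i, t⟩ h1 ⟨i', t'⟩ h2
      simp only [Finset.mem_filter, w3] at h1 h2
      obtain ⟨hii, htt⟩ := leaf_inj m k ((Finset.mem_filter.mp h1).2.symm.trans (Finset.mem_filter.mp h2).2)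
      exact Prod.ext hii htt
    rw [hA, hB]
    omega

end Stmt9Aux

theorem stmt9 (m : ℕ) (hm : Even m) (h4 : 4 ≤ m) :
    ∃ (n1 n2 n3 : ℕ) (H : Finset (Finset (Fin n1 ⊕ Fin n2 ⊕ Fin n3))),
      (∀ s ∈ H, ∃ a b c, s = {Sum.inl a, Sum.inr (Sum.inl b), Sum.inr (Sum.inr c)}) ∧
      (∀ a : Fin n1, (H.filter (fun s => Sum.inl a ∈ s)).card = m) ∧
      (∀ v : Fin n2 ⊕ Fin n3, (H.filter (fun s => Sum.inr v ∈ s)).card ≤ m / 2 + 1) ∧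
      ¬ ∃ N ⊆ H, (∀ s ∈ N, ∀ t ∈ N, s ≠ t → Disjoint s t) ∧
          ∀ a : Fin n1, ∃ s ∈ N, Sum.inl a ∈ s := by
  obtain ⟨k, hk⟩ := hm
  have hmk : m = k + k := hk
  refine ⟨m+1, m + m*k, m + m*k, Finset.image (Stmt9Aux.edge m k) Finset.univ, ?_, ?_, ?_, ?_⟩
  · intro s hs
    obtain ⟨e, -, rfl⟩ := Finset.mem_image.mp hs
    exact ⟨_, _, _, rfl⟩
  · intro a
    rw [Stmt9Aux.card_filter_image _ (Stmt9Aux.edge_injective m k)]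
    exact Stmt9Aux.col_degree m k hmk a
  · intro v
    have hk2 : m / 2 = k := by omega
    rcases v with b | b
    · rw [Stmt9Aux.card_filter_image _ (Stmt9Aux.edge_injective m k), hk2]
      exact Stmt9Aux.u2_degree m k b
    · rw [Stmt9Aux.card_filter_image _ (Stmt9Aux.edge_injective m k), hk2]
      exact Stmt9Aux.w3_degree m k b
  · rintro ⟨N, hNH, hdisj, hcov⟩
    obtain ⟨s, hsN, hs0⟩ := hcov 0
    obtain ⟨e, -, rfl⟩ := Finset.mem_image.mp (hNH hsN)
    have hc0 : (0 : Fin (m+1)) = Stmt9Aux.col m k e := (Stmt9Aux.mem_inl_edge m k).mp hs0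
    rcases e with i | (p | p)
    rotate_left
    · exact absurd hc0.symm (Fin.succ_ne_zero _)
    · exact absurd hc0.symm (Fin.succ_ne_zero _)
    obtain ⟨t, htN, hti⟩ := hcov i.succ
    obtain ⟨e', -, rfl⟩ := Finset.mem_image.mp (hNH htN)
    have hc' : i.succ = Stmt9Aux.col m k e' := (Stmt9Aux.mem_inl_edge m k).mp hti
    have hne : Stmt9Aux.edge m k (Sum.inl i) ≠ Stmt9Aux.edge m k e' := by
      intro h
      have he := Stmt9Aux.edge_injective m k h
      rw [← he] at hc'
      exact Fin.succ_ne_zero i (by simpa [Stmt9Aux.col] using hc')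
    have hd := hdisj _ hsN _ htN hne
    rcases e' with j | (p | p)
    · exact Fin.succ_ne_zero i (by simpa [Stmt9Aux.col] using hc')
    · have hip : p.1 = i := by
        have h2 : i.succ = p.1.succ := by simpa [Stmt9Aux.col] using hc'
        exact (Fin.succ_injective _ h2).symm
      have h1 : Sum.inr (Sum.inl (Stmt9Aux.cen m k i)) ∈ Stmt9Aux.edge m k (Sum.inl i) :=
        (Stmt9Aux.mem_inr_inl_edge m k).mpr rfl
      have h2 : Sum.inr (Sum.inl (Stmt9Aux.cen m k i)) ∈ Stmt9Aux.edge m k (Sum.inr (Sum.inl p)) :=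
        (Stmt9Aux.mem_inr_inl_edge m k).mpr (by simp [Stmt9Aux.u2, hip])
      exact Finset.disjoint_left.mp hd h1 h2
    · have hip : p.1 = i := by
        have h2 : i.succ = p.1.succ := by simpa [Stmt9Aux.col] using hc'
        exact (Fin.succ_injective _ h2).symm
      have h1 : Sum.inr (Sum.inr (Stmt9Aux.cen m k i)) ∈ Stmt9Aux.edge m k (Sum.inl i) :=
        (Stmt9Aux.mem_inr_inr_edge m k).mpr rfl
      have h2 : Sum.inr (Sum.inr (Stmt9Aux.cen m k i)) ∈ Stmt9Aux.edge m k (Sum.inr (Sum.inr p)) :=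
        (Stmt9Aux.mem_inr_inr_edge m k).mpr (by simp [Stmt9Aux.w3, hip])
      exact Finset.disjoint_left.mp hd h1 h2
end

section
/- There exists a tripartite 3-uniform hypergraph H with parts V1, V2, V3 in which every vertex of V1 has degree 3, every vertex of V2 ∪ V3 has degree at most 2, and H has no matching covering all of V1. -/
set_option maxRecDepth 4000

private def myE (a : Fin 4) (b c : Fin 6) : Finset (Fin 4 ⊕ Fin 6 ⊕ Fin 6) :=
  {Sum.inl a, Sum.inr (Sum.inl b), Sum.inr (Sum.inr c)}

private def myC0 : Finset (Finset (Fin 4 ⊕ Fin 6 ⊕ Fin 6)) := {myE 0 0 0, myE 0 1 1, myE 0 4 4}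
private def myC1 : Finset (Finset (Fin 4 ⊕ Fin 6 ⊕ Fin 6)) := {myE 1 1 0, myE 1 0 1, myE 1 5 5}
private def myC2 : Finset (Finset (Fin 4 ⊕ Fin 6 ⊕ Fin 6)) := {myE 2 2 2, myE 2 3 3, myE 2 4 5}
private def myC3 : Finset (Finset (Fin 4 ⊕ Fin 6 ⊕ Fin 6)) := {myE 3 3 2, myE 3 2 3, myE 3 5 4}

private def myH : Finset (Finset (Fin 4 ⊕ Fin 6 ⊕ Fin 6)) := myC0 ∪ myC1 ∪ myC2 ∪ myC3

private lemma myHmem {s : Finset (Fin 4 ⊕ Fin 6 ⊕ Fin 6)} (hs : s ∈ myH) :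
    s = myE 3 3 2 ∨ s = myE 3 2 3 ∨ s = myE 2 2 2 ∨ s = myE 2 3 3 ∨ s = myE 1 1 0 ∨
    s = myE 1 0 1 ∨ s = myE 0 0 0 ∨ s = myE 0 1 1 ∨ s = myE 0 4 4 ∨ s = myE 1 5 5 ∨
    s = myE 2 4 5 ∨ s = myE 3 5 4 := by
  simpa [myH, myC0, myC1, myC2, myC3, Finset.mem_union, Finset.mem_insert,
    Finset.mem_singleton, or_assoc] using hs

private lemma myOnly {s : Finset (Fin 4 ⊕ Fin 6 ⊕ Fin 6)} (hs : s ∈ myH) (a b : Fin 4)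
    (ha : Sum.inl a ∈ s) (hb : Sum.inl b ∈ s) : a = b := by
  rcases myHmem hs with rfl|rfl|rfl|rfl|rfl|rfl|rfl|rfl|rfl|rfl|rfl|rfl <;>
    simp_all [myE]

private lemma myClass0 {s : Finset (Fin 4 ⊕ Fin 6 ⊕ Fin 6)} (hs : s ∈ myH)
    (h : Sum.inl 0 ∈ s) : s ∈ myC0 := by
  rcases myHmem hs with rfl|rfl|rfl|rfl|rfl|rfl|rfl|rfl|rfl|rfl|rfl|rfl <;>
    first | decide | exact absurd h (by decide)

private lemma myClass1 {s : Finset (Fin 4 ⊕ Fin 6 ⊕ Fin 6)} (hs : s ∈ myH)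
    (h : Sum.inl 1 ∈ s) : s ∈ myC1 := by
  rcases myHmem hs with rfl|rfl|rfl|rfl|rfl|rfl|rfl|rfl|rfl|rfl|rfl|rfl <;>
    first | decide | exact absurd h (by decide)

private lemma myClass2 {s : Finset (Fin 4 ⊕ Fin 6 ⊕ Fin 6)} (hs : s ∈ myH)
    (h : Sum.inl 2 ∈ s) : s ∈ myC2 := by
  rcases myHmem hs with rfl|rfl|rfl|rfl|rfl|rfl|rfl|rfl|rfl|rfl|rfl|rfl <;>
    first | decide | exact absurd h (by decide)

private lemma myClass3 {s : Finset (Fin 4 ⊕ Fin 6 ⊕ Fin 6)} (hs : s ∈ myH)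
    (h : Sum.inl 3 ∈ s) : s ∈ myC3 := by
  rcases myHmem hs with rfl|rfl|rfl|rfl|rfl|rfl|rfl|rfl|rfl|rfl|rfl|rfl <;>
    first | decide | exact absurd h (by decide)

private lemma myKey {s0 s1 s2 s3 : Finset (Fin 4 ⊕ Fin 6 ⊕ Fin 6)}
    (h0 : s0 ∈ myC0) (h1 : s1 ∈ myC1) (h2 : s2 ∈ myC2) (h3 : s3 ∈ myC3) :
    ¬(Disjoint s0 s1 ∧ Disjoint s0 s2 ∧ Disjoint s0 s3 ∧ Disjoint s1 s2 ∧
      Disjoint s1 s3 ∧ Disjoint s2 s3) := by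
  simp only [myC0, myC1, myC2, myC3, Finset.mem_insert, Finset.mem_singleton] at h0 h1 h2 h3
  rcases h0 with rfl|rfl|rfl <;> rcases h1 with rfl|rfl|rfl <;>
    rcases h2 with rfl|rfl|rfl <;> rcases h3 with rfl|rfl|rfl <;>
    rintro ⟨d1, d2, d3, d4, d5, d6⟩ <;>
    first
      | exact absurd d1 (by decide)
      | exact absurd d2 (by decide)
      | exact absurd d3 (by decide)
      | exact absurd d4 (by decide)
      | exact absurd d5 (by decide)
      | exact absurd d6 (by decide)

private lemma myForm : ∀ s ∈ myH, ∃ (a : Fin 4) (b c : Fin 6),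
    s = {Sum.inl a, Sum.inr (Sum.inl b), Sum.inr (Sum.inr c)} := by
  intro s hs
  rcases myHmem hs with rfl|rfl|rfl|rfl|rfl|rfl|rfl|rfl|rfl|rfl|rfl|rfl <;>
    exact ⟨_, _, _, rfl⟩

private lemma myDeg1 : ∀ a : Fin 4, (myH.filter (fun s => Sum.inl a ∈ s)).card = 3 := by
  intro a
  fin_cases a <;> rfl

private lemma myDeg2 : ∀ v : Fin 6 ⊕ Fin 6, (myH.filter (fun s => Sum.inr v ∈ s)).card ≤ 2 := by
  intro v
  rcases v with b | c <;> [fin_cases b; fin_cases c] <;> first | rfl | exact Nat.le_succ 1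

theorem stmt10 :
    ∃ (n1 n2 n3 : ℕ) (H : Finset (Finset (Fin n1 ⊕ Fin n2 ⊕ Fin n3))),
      (∀ s ∈ H, ∃ a b c, s = {Sum.inl a, Sum.inr (Sum.inl b), Sum.inr (Sum.inr c)}) ∧
      (∀ a : Fin n1, (H.filter (fun s => Sum.inl a ∈ s)).card = 3) ∧
      (∀ v : Fin n2 ⊕ Fin n3, (H.filter (fun s => Sum.inr v ∈ s)).card ≤ 2) ∧
      ¬ ∃ N ⊆ H, (∀ s ∈ N, ∀ t ∈ N, s ≠ t → Disjoint s t) ∧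
          ∀ a : Fin n1, ∃ s ∈ N, Sum.inl a ∈ s := by
  refine ⟨4, 6, 6, myH, myForm, myDeg1, myDeg2, ?_⟩
  rintro ⟨N, hNH, hdisj, hcov⟩
  obtain ⟨s0, hs0N, hm0⟩ := hcov 0
  obtain ⟨s1, hs1N, hm1⟩ := hcov 1
  obtain ⟨s2, hs2N, hm2⟩ := hcov 2
  obtain ⟨s3, hs3N, hm3⟩ := hcov 3
  have h0 := myClass0 (hNH hs0N) hm0
  have h1 := myClass1 (hNH hs1N) hm1
  have h2 := myClass2 (hNH hs2N) hm2
  have h3 := myClass3 (hNH hs3N) hm3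
  have ne : ∀ {s t : Finset (Fin 4 ⊕ Fin 6 ⊕ Fin 6)}, s ∈ N → t ∈ N →
      ∀ a b : Fin 4, Sum.inl a ∈ s → Sum.inl b ∈ t → a ≠ b → s ≠ t := by
    intro s t hsN htN a b ha hb hab h
    exact hab (myOnly (hNH htN) a b (h ▸ ha) hb)
  exact myKey h0 h1 h2 h3
    ⟨hdisj _ hs0N _ hs1N (ne hs0N hs1N 0 1 hm0 hm1 (by decide)),
     hdisj _ hs0N _ hs2N (ne hs0N hs2N 0 2 hm0 hm2 (by decide)),
     hdisj _ hs0N _ hs3N (ne hs0N hs3N 0 3 hm0 hm3 (by decide)),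
     hdisj _ hs1N _ hs2N (ne hs1N hs2N 1 2 hm1 hm2 (by decide)),
     hdisj _ hs1N _ hs3N (ne hs1N hs3N 1 3 hm1 hm3 (by decide)),
     hdisj _ hs2N _ hs3N (ne hs2N hs3N 2 3 hm2 hm3 (by decide))⟩
end

section
/- For every even m ≥ 2, any matching in the coloured graph G_m that contains one edge of the blue colour class must omit at least one of the non-blue colours; in particular every rainbow matching of G_m has size at most m. -/
lemma edge_struct {m : ℕ} {e : Sym2 (DSV m)} (he : e ∈ (Gm m).edgeSet) :
    (∃ i : Fin m, e = s((i, Sum.inl 0), (i, Sum.inl 1)) ∧ colm m e = none) ∨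
    (∃ (i : Fin m) (j : Fin 2) (l : Fin (m/2)),
      e = s((i, Sum.inl j), (i, Sum.inr (j, l))) ∧ colm m e = some i) := by
  induction e using Sym2.ind with
  | _ a b =>
    rw [SimpleGraph.mem_edgeSet, Gm, SimpleGraph.fromRel_adj] at he
    obtain ⟨hne, h | h⟩ := he
    · obtain ⟨h1, h2 | ⟨j, l, hj, hl⟩⟩ := h
      · obtain ⟨ja, hja⟩ := Sum.isLeft_iff.mp h2.1
        obtain ⟨jb, hjb⟩ := Sum.isLeft_iff.mp h2.2
        left
        obtain ⟨i, x⟩ := a; obtain ⟨i', y⟩ := b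
        simp only at h1 hja hjb; subst h1 hja hjb
        have hjj : ja ≠ jb := fun h => hne (by rw [h])
        refine ⟨i, ?_, by simp [colm]⟩
        fin_cases ja <;> fin_cases jb <;> simp_all <;> rw [Sym2.eq_swap]
      · right
        obtain ⟨i, x⟩ := a; obtain ⟨i', y⟩ := b
        simp only at h1 hj hl; subst h1 hj hl
        exact ⟨i, j, l, rfl, by simp [colm]⟩
    · obtain ⟨h1, h2 | ⟨j, l, hj, hl⟩⟩ := h
      · obtain ⟨ja, hja⟩ := Sum.isLeft_iff.mp h2.2
        obtain ⟨jb, hjb⟩ := Sum.isLeft_iff.mp h2.1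
        left
        obtain ⟨i, x⟩ := a; obtain ⟨i', y⟩ := b
        simp only at h1 hja hjb; subst h1 hja hjb
        have hjj : ja ≠ jb := fun h => hne (by rw [h])
        refine ⟨i', ?_, by simp [colm]⟩
        fin_cases ja <;> fin_cases jb <;> simp_all <;> rw [Sym2.eq_swap]
      · right
        obtain ⟨i, x⟩ := a; obtain ⟨i', y⟩ := b
        simp only at h1 hj hl; subst h1 hj hl
        refine ⟨i', j, l, Sym2.eq_swap, by simp [colm, min_comm]⟩

theorem stmt14 (m : ℕ) (hm : Even m) (h2 : 2 ≤ m) (M : Set (Sym2 (DSV m)))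
    (hM : IsMatching (Gm m) M) :
    ((∃ e ∈ M, colm m e = none) → ∃ i : Fin m, ∀ e ∈ M, colm m e ≠ some i) ∧
    ((∀ e ∈ M, ∀ f ∈ M, e ≠ f → colm m e ≠ colm m f) → M.ncard ≤ m) := by
  obtain ⟨hsub, hdisj⟩ := hM
  have part1 : (∃ e ∈ M, colm m e = none) → ∃ i : Fin m, ∀ e ∈ M, colm m e ≠ some i := by
    rintro ⟨e, heM, hec⟩
    rcases edge_struct (hsub heM) with ⟨i, hee, _⟩ | ⟨i, j, l, hee, hec'⟩
    · refine ⟨i, fun f hfM hfc => ?_⟩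
      rcases edge_struct (hsub hfM) with ⟨i', hff, hfc'⟩ | ⟨i', j', l', hff, hfc'⟩
      · rw [hfc'] at hfc; exact nomatch hfc
      · have hii : i' = i := Option.some_injective _ (hfc'.symm.trans hfc)
        subst hii
        have hef : e ≠ f := fun h => by rw [h, hfc'] at hec; exact nomatch hec
        have := hdisj e heM f hfM hef (i', Sum.inl j')
        apply this
        · rw [hee]; fin_cases j' <;> simp [Sym2.mem_iff]
        · rw [hff]; simp [Sym2.mem_iff]
    · rw [hec'] at hec; exact nomatch hec
  refine ⟨part1, fun hrb => ?_⟩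
  have hMfin : M.Finite := Set.toFinite M
  have hinj : Set.InjOn (colm m) M := by
    intro e he f hf hef
    by_contra hne
    exact hrb e he f hf hne hef
  obtain ⟨c, hc⟩ : ∃ c : Option (Fin m), ∀ e ∈ M, colm m e ≠ c := by
    by_cases hb : ∃ e ∈ M, colm m e = none
    · obtain ⟨i, hi⟩ := part1 hb
      exact ⟨some i, hi⟩
    · push_neg at hb
      exact ⟨none, hb⟩
  have himg : colm m '' M ⊆ {c}ᶜ := by
    rintro x ⟨e, he, rfl⟩
    exact hc e he
  have h1 : M.ncard = (colm m '' M).ncard := (Set.ncard_image_of_injOn hinj).symm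
  have h2' : (colm m '' M).ncard ≤ ({c}ᶜ : Set (Option (Fin m))).ncard :=
    Set.ncard_le_ncard himg (Set.toFinite _)
  have h3 : ({c}ᶜ : Set (Option (Fin m))).ncard = m := by
    rw [Set.ncard_eq_toFinset_card']
    simp [Finset.card_compl]
  omega
end
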